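/- Let V be a finite set of operations with type function typ : V → Op, per-type latency LO : Op → ℕ with LO o ≥ 1 (so each operation v has latency lat v = LO (typ v)), a dependence relation E on V, and resource bounds R : Op → ℕ with R o ≥ 1. Let start : V → ℕ be any schedule that respects E and satisfies the resource constraint R. Then the makespan of the schedule is at least max( C , max over types o of ⌈ LO o × N o / R o ⌉ ), where C is the maximum over all dependence chains v₀, …, v_k in (V, E) of ∑_{i=0}^{k} LO (typ vᵢ), and N o = |{v ∈ V : typ v = o}|. -/

import Mathlib

/-- **Latency lower bound under operation resource constraints.**
Operations have per-type latencies `LO (typ v) ≥ 1`; the schedule `start`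
respects the dependence relation `E` and, at every cycle, uses at most `R o`
units of each operation type `o`.  Then the makespan is at least the
latency-weighted length of every dependence chain (so it is at least the
critical path `C`), and for every type `o` it is at least
`⌈LO o * N o / R o⌉` where `N o` is the number of operations of type `o`;
hence it is at least the maximum of all these quantities. -/
theorem latency_lower_bound_under_resource_constraints
    {V Op : Type*} [Fintype V] [Fintype Op] [DecidableEq Op]
    (E : V → V → Prop) (typ : V → Op)
    (LO : Op → ℕ) (hLO : ∀ o, 1 ≤ LO o)
    (R : Op → ℕ) (hR : ∀ o, 1 ≤ R o)
    (start : V → ℕ)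
    (hresp : ∀ v w, E v w → start v + LO (typ v) ≤ start w)
    (hres : ∀ t o,
      ((Finset.univ.filter
          (fun v => typ v = o ∧ start v ≤ t ∧ t < start v + LO (typ v))).card) ≤ R o) :
    (∀ (k : ℕ) (v : Fin (k + 1) → V),
        (∀ i : Fin k, E (v i.castSucc) (v i.succ)) →
        ∑ i, LO (typ (v i)) ≤ Finset.univ.sup (fun u => start u + LO (typ u))) ∧
    (∀ o : Op,
        (LO o * (Finset.univ.filter (fun v => typ v = o)).card + R o - 1) / R o
          ≤ Finset.univ.sup (fun u => start u + LO (typ u))) := by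
  classical
  set M := Finset.univ.sup (fun u => start u + LO (typ u)) with hM
  have hle : ∀ u : V, start u + LO (typ u) ≤ M := fun u =>
    Finset.le_sup (f := fun u => start u + LO (typ u)) (Finset.mem_univ u)
  have chain : ∀ (k : ℕ) (v : Fin (k + 1) → V),
      (∀ i : Fin k, E (v i.castSucc) (v i.succ)) →
      ∑ i, LO (typ (v i)) ≤ start (v (Fin.last k)) + LO (typ (v (Fin.last k))) := by
    intro k
    induction k with
    | zero => intro v _; simp
    | succ k ih =>
        intro v hch
        rw [Fin.sum_univ_castSucc]
        have h1 : ∑ i : Fin (k + 1), LO (typ ((v ∘ Fin.castSucc) i))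
            ≤ start ((v ∘ Fin.castSucc) (Fin.last k))
              + LO (typ ((v ∘ Fin.castSucc) (Fin.last k))) := by
          apply ih
          intro i
          have := hch i.castSucc
          exact this
        have h2 : start (v (Fin.last k).castSucc) + LO (typ (v (Fin.last k).castSucc))
            ≤ start (v (Fin.last (k + 1))) := by
          have := hresp _ _ (hch (Fin.last k))
          simpa [Fin.succ_last] using this
        simp only [Function.comp] at h1
        omega
  constructor
  · intro k v hch
    calc ∑ i, LO (typ (v i))
        ≤ start (v (Fin.last k)) + LO (typ (v (Fin.last k))) := chain k v hch
      _ ≤ M := hle _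
  · intro o
    set N := (Finset.univ.filter (fun v => typ v = o)).card with hN
    have key : LO o * N ≤ M * R o := by
      have h1 : ∑ t ∈ Finset.range M,
          ((Finset.univ.filter
            (fun v => typ v = o ∧ start v ≤ t ∧ t < start v + LO (typ v))).card)
          ≤ M * R o := by
        calc ∑ t ∈ Finset.range M, _ ≤ ∑ t ∈ Finset.range M, R o :=
              Finset.sum_le_sum (fun t _ => hres t o)
          _ = M * R o := by simp [Finset.sum_const, mul_comm]
      have h2 : ∑ t ∈ Finset.range M,
          ((Finset.univ.filter
            (fun v => typ v = o ∧ start v ≤ t ∧ t < start v + LO (typ v))).card)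
          = LO o * N := by
        have : ∀ t, ((Finset.univ.filter
            (fun v => typ v = o ∧ start v ≤ t ∧ t < start v + LO (typ v))).card)
            = ∑ v ∈ Finset.univ.filter (fun v => typ v = o),
                (if start v ≤ t ∧ t < start v + LO (typ v) then 1 else 0) := by
          intro t
          rw [Finset.card_filter]
          rw [Finset.sum_filter]
          apply Finset.sum_congr rfl
          intro v _
          by_cases h : typ v = o <;> simp [h]
        simp only [this]
        rw [Finset.sum_comm]
        rw [hN, Finset.card_eq_sum_ones, Finset.mul_sum]
        apply Finset.sum_congr rfl
        intro v hv
        have hvM : start v + LO (typ v) ≤ M := hle v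
        have : ∑ t ∈ Finset.range M,
            (if start v ≤ t ∧ t < start v + LO (typ v) then 1 else 0)
            = ((Finset.range M).filter
                (fun t => start v ≤ t ∧ t < start v + LO (typ v))).card := by
          rw [Finset.card_filter]
        rw [this]
        have : (Finset.range M).filter
            (fun t => start v ≤ t ∧ t < start v + LO (typ v))
            = Finset.Ico (start v) (start v + LO (typ v)) := by
          ext t
          simp only [Finset.mem_filter, Finset.mem_range, Finset.mem_Ico]
          omega
        rw [this, Nat.card_Ico]
        have ht : typ v = o := (Finset.mem_filter.mp hv).2
        rw [ht]
        omega
      omega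
    rw [Nat.div_le_iff_le_mul_add_pred (hR o)]
    have key' : LO o * N ≤ R o * M := by calc LO o * N ≤ M * R o := key
      _ = R o * M := mul_comm _ _
    have := hR o
    omega
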